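/- Let g be a complex semisimple Lie algebra, (f,h,e) an sl₂-triple, and decompose g into irreducible sl₂-submodules. If Y is an irreducible sl₂-submodule of g of highest weight μ with highest weight vector y, then the quotient Y/(Y ∩ z(e)) ≅ Y/⟨y⟩, as an sl₂-module via the induced action through ad e, is irreducible of highest weight μ − 1, with highest vector the image of [f, y]. -/

import Mathlib

set_option maxHeartbeats 1000000 in
/-- For an irreducible sl₂-submodule `Y ⊆ g` of highest weight `μ`
with highest vector `y`, the quotient `Y/⟨y⟩` (raising operator induced by `ad e`,
Cartan element acting as `ad h + 1`) is irreducible of highest weight `μ − 1`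
with highest vector the image of `[f, y]`. -/
theorem quotient_of_irreducible_component_is_irreducible
    {g : Type*} [LieRing g] [LieAlgebra ℂ g] [LieAlgebra.IsSemisimple ℂ g]
    [FiniteDimensional ℂ g] {h e f : g} (t : IsSl2Triple h e f)
    (Y : Submodule ℂ g)
    (hYe : ∀ z ∈ Y, ⁅e, z⁆ ∈ Y) (hYf : ∀ z ∈ Y, ⁅f, z⁆ ∈ Y) (hYh : ∀ z ∈ Y, ⁅h, z⁆ ∈ Y)
    (hirr : Y ≠ ⊥ ∧ ∀ W : Submodule ℂ g, W ≤ Y → (∀ z ∈ W, ⁅e, z⁆ ∈ W) →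
      (∀ z ∈ W, ⁅f, z⁆ ∈ W) → (∀ z ∈ W, ⁅h, z⁆ ∈ W) → W = ⊥ ∨ W = Y)
    (μ : ℕ) (hμ : 0 < μ) (y : g) (hy : y ∈ Y) (hy0 : y ≠ 0)
    (hey : ⁅e, y⁆ = 0) (hhy : ⁅h, y⁆ = (μ : ℂ) • y) :
    ∃ E' H' F' : Module.End ℂ (Y ⧸ Submodule.span ℂ {(⟨y, hy⟩ : Y)}),
      (∀ z : Y, E' (Submodule.Quotient.mk z) =
        Submodule.Quotient.mk (⟨⁅e, (z : g)⁆, hYe (z : g) z.2⟩ : Y)) ∧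
      (∀ z : Y, H' (Submodule.Quotient.mk z) =
        Submodule.Quotient.mk (⟨⁅h, (z : g)⁆, hYh (z : g) z.2⟩ : Y) +
          Submodule.Quotient.mk z) ∧
      H' * E' - E' * H' = 2 • E' ∧ H' * F' - F' * H' = -(2 • F') ∧
      E' * F' - F' * E' = H' ∧
      (Submodule.Quotient.mk (⟨⁅f, y⁆, hYf y hy⟩ : Y) :
        Y ⧸ Submodule.span ℂ {(⟨y, hy⟩ : Y)}) ≠ 0 ∧
      E' (Submodule.Quotient.mk (⟨⁅f, y⁆, hYf y hy⟩ : Y)) = 0 ∧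
      H' (Submodule.Quotient.mk (⟨⁅f, y⁆, hYf y hy⟩ : Y)) =
        ((μ : ℂ) - 1) • Submodule.Quotient.mk (⟨⁅f, y⁆, hYf y hy⟩ : Y) ∧
      ∀ W : Submodule ℂ (Y ⧸ Submodule.span ℂ {(⟨y, hy⟩ : Y)}),
        (∀ w ∈ W, E' w ∈ W) → (∀ w ∈ W, H' w ∈ W) → (∀ w ∈ W, F' w ∈ W) →
          W = ⊥ ∨ W = ⊤ := by
  classical
  -- the primitive vector structure
  have P : t.HasPrimitiveVectorWith y (μ : ℂ) := ⟨hy0, hhy, hey⟩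
  set φ : Module.End ℂ g := LieModule.toEnd ℂ g g f with hφ
  set vg : ℕ → g := fun k => (φ ^ k) y with hvg
  have vg0 : vg 0 = y := by simp [hvg]
  have vgsucc : ∀ k, vg (k + 1) = ⁅f, vg k⁆ := fun k => (P.lie_f_pow_toEnd_f k).symm
  have Lh : ∀ k : ℕ, ⁅h, vg k⁆ = ((μ : ℂ) - 2 * k) • vg k := fun k => P.lie_h_pow_toEnd_f k
  have Le : ∀ k : ℕ, ⁅e, vg (k + 1)⁆ = (((k : ℂ) + 1) * ((μ : ℂ) - k)) • vg k :=
    fun k => P.lie_e_pow_succ_toEnd_f k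
  have vgtop : vg (μ + 1) = 0 := P.pow_toEnd_f_eq_zero_of_eq_nat rfl
  have vgzero : ∀ k, μ + 1 ≤ k → vg k = 0 := by
    intro k hk
    obtain ⟨j, rfl⟩ := Nat.exists_eq_add_of_le hk
    induction j with
    | zero => simpa using vgtop
    | succ j ih =>
        have := ih (by omega)
        rw [show μ + 1 + (j + 1) = (μ + 1 + j) + 1 by omega, vgsucc, this, lie_zero]
  have vgne : ∀ k, k ≤ μ → vg k ≠ 0 := fun k hk =>
    P.pow_toEnd_f_ne_zero_of_eq_nat rfl hk
  have memY : ∀ k, vg k ∈ Y := by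
    intro k
    induction k with
    | zero => rw [vg0]; exact hy
    | succ k ih => rw [vgsucc]; exact hYf _ ih
  -- the span of the vg's is Y
  set Wg : Submodule ℂ g := Submodule.span ℂ (Set.range fun i : Fin (μ + 1) => vg i) with hWgdef
  have hmemWg : ∀ k, k ≤ μ → vg k ∈ Wg := fun k hk =>
    Submodule.subset_span ⟨⟨k, by omega⟩, rfl⟩
  have hWgY : Wg = Y := by
    refine ((hirr.2 Wg ?_ ?_ ?_ ?_).resolve_left ?_)
    · rw [hWgdef, Submodule.span_le]
      rintro _ ⟨i, rfl⟩; exact memY i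
    · intro z hz
      have : Wg ≤ Wg.comap (LieAlgebra.ad ℂ g e) := by
        rw [hWgdef, Submodule.span_le]
        rintro _ ⟨⟨k, hk⟩, rfl⟩
        simp only [SetLike.mem_coe, Submodule.mem_comap, LieAlgebra.ad_apply]
        cases k with
        | zero => rw [vg0, hey]; exact Wg.zero_mem
        | succ k => rw [Le k]; exact Wg.smul_mem _ (hmemWg k (by omega))
      simpa only [Submodule.mem_comap, LieAlgebra.ad_apply] using this hz
    · intro z hz
      have : Wg ≤ Wg.comap (LieAlgebra.ad ℂ g f) := by
        rw [hWgdef, Submodule.span_le]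
        rintro _ ⟨⟨k, hk⟩, rfl⟩
        simp only [SetLike.mem_coe, Submodule.mem_comap, LieAlgebra.ad_apply]
        rw [← vgsucc k]
        rcases Nat.lt_or_ge k μ with hkμ | hkμ
        · exact hmemWg (k + 1) (by omega)
        · rw [vgzero (k + 1) (by omega)]; exact Wg.zero_mem
      simpa only [Submodule.mem_comap, LieAlgebra.ad_apply] using this hz
    · intro z hz
      have : Wg ≤ Wg.comap (LieAlgebra.ad ℂ g h) := by
        rw [hWgdef, Submodule.span_le]
        rintro _ ⟨⟨k, hk⟩, rfl⟩
        simp only [SetLike.mem_coe, Submodule.mem_comap, LieAlgebra.ad_apply]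
        rw [Lh k]; exact Wg.smul_mem _ (hmemWg k (by omega))
      simpa only [Submodule.mem_comap, LieAlgebra.ad_apply] using this hz
    · intro hbot
      have hyW : y ∈ Wg := vg0 ▸ hmemWg 0 (by omega)
      rw [hbot] at hyW
      exact hy0 (by simpa using hyW)
  -- lift to Y
  set vY : ℕ → Y := fun k => ⟨vg k, memY k⟩ with hvY
  have vYzero : ∀ k, μ + 1 ≤ k → vY k = 0 := fun k hk => Subtype.ext (vgzero k hk)
  -- linear independence in g
  have lig : LinearIndependent ℂ (fun i : Fin (μ + 1) => vg i) := by
    apply (LieAlgebra.ad ℂ g h).eigenvectors_linearIndependent'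
      (fun i : Fin (μ + 1) => (μ : ℂ) - 2 * i)
      (fun i j hij => by
        have : (2 : ℂ) * i = 2 * j := by linear_combination -hij
        have : (i : ℂ) = j := by linear_combination this / 2
        exact Fin.ext (by exact_mod_cast this))
    intro i
    refine ⟨Module.End.mem_eigenspace_iff.mpr ?_, vgne i (by omega)⟩
    rw [LieAlgebra.ad_apply, Lh]
  have liY : LinearIndependent ℂ (fun i : Fin (μ + 1) => vY i) := by
    apply LinearIndependent.of_comp Y.subtype
    exact lig
  have spanY : Submodule.span ℂ (Set.range fun i : Fin (μ + 1) => vY i) = ⊤ := by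
    apply Submodule.map_injective_of_injective Y.injective_subtype
    rw [Submodule.map_span, Submodule.map_top, Submodule.range_subtype,
      ← Set.range_comp]
    exact hWgY
  -- the quotient
  set S : Submodule ℂ Y := Submodule.span ℂ {(⟨y, hy⟩ : Y)} with hS
  set π : Y → (Y ⧸ S) := fun z => Submodule.Quotient.mk z with hπ
  have vY0 : vY 0 = (⟨y, hy⟩ : Y) := Subtype.ext vg0
  have hπ0 : π (vY 0) = 0 := by
    rw [vY0]
    exact (Submodule.Quotient.mk_eq_zero S).mpr (Submodule.subset_span rfl)
  have πsmul : ∀ (a : ℂ) (z : Y), π (a • z) = a • π z := fun a z => rfl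
  -- basis of the quotient
  have hcex : ∃ c : Module.Basis (Fin μ) ℂ (Y ⧸ S), ∀ j : Fin μ, c j = π (vY ((j : ℕ) + 1)) := by
    have hind : LinearIndependent ℂ (fun j : Fin μ => π (vY ((j : ℕ) + 1))) := by
      rw [Fintype.linearIndependent_iff]
      intro G hG
      have hmem : (∑ j : Fin μ, G j • vY ((j : ℕ) + 1)) ∈ S := by
        rw [← Submodule.Quotient.mk_eq_zero S, ← Submodule.mkQ_apply, map_sum]
        simpa [Submodule.mkQ_apply, π] using hG
      rw [hS, Submodule.mem_span_singleton] at hmem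
      obtain ⟨a, ha⟩ := hmem
      have key := Fintype.linearIndependent_iff.mp liY
        (fun i : Fin (μ + 1) => Fin.cases (-a) (fun j => G j) i) ?_
      · intro j
        have := key j.succ
        simpa using this
      · rw [Fin.sum_univ_succ]
        simp only [Fin.cases_zero, Fin.cases_succ, Fin.val_succ, Fin.val_zero]
        rw [← vY0] at ha
        rw [← ha, ← add_smul]
        simp
    have hsp : ⊤ ≤ Submodule.span ℂ (Set.range fun j : Fin μ => π (vY ((j : ℕ) + 1))) := by
      intro q _
      obtain ⟨z, rfl⟩ := Submodule.Quotient.mk_surjective S q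
      have hz : z ∈ Submodule.span ℂ (Set.range fun i : Fin (μ + 1) => vY i) := by
        rw [spanY]; trivial
      have : Submodule.Quotient.mk (p := S) z ∈
          Submodule.map S.mkQ (Submodule.span ℂ (Set.range fun i : Fin (μ + 1) => vY i)) :=
        ⟨z, hz, rfl⟩
      rw [Submodule.map_span, ← Set.range_comp] at this
      refine Submodule.span_le.mpr ?_ this
      rintro _ ⟨i, rfl⟩
      rcases i with ⟨k, hk⟩
      cases k with
      | zero =>
          have h0mem : vY 0 ∈ S := by rw [vY0]; exact Submodule.mem_span_singleton_self _
          have h0 : (S.mkQ ∘ fun i : Fin (μ + 1) => vY (i : ℕ)) ⟨0, hk⟩ = 0 := by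
            simpa [Submodule.mkQ_apply] using h0mem
          rw [h0]
          exact (Submodule.span ℂ _).zero_mem
      | succ k =>
          exact Submodule.subset_span ⟨⟨k, by omega⟩, rfl⟩
    exact ⟨Module.Basis.mk hind hsp, fun j => Module.Basis.mk_apply hind hsp j⟩
  obtain ⟨c, hc⟩ := hcex
  -- E' and H'
  have hadE : ∀ z ∈ Y, (LieAlgebra.ad ℂ g e) z ∈ Y := fun z hz => by
    rw [LieAlgebra.ad_apply]; exact hYe z hz
  have hadH : ∀ z ∈ Y, (LieAlgebra.ad ℂ g h) z ∈ Y := fun z hz => by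
    rw [LieAlgebra.ad_apply]; exact hYh z hz
  set eY : Y →ₗ[ℂ] Y := (LieAlgebra.ad ℂ g e).restrict hadE with heYdef
  set hY : Y →ₗ[ℂ] Y := (LieAlgebra.ad ℂ g h).restrict hadH with hhYdef
  have eYapp : ∀ z : Y, eY z = ⟨⁅e, (z : g)⁆, hYe _ z.2⟩ := fun z =>
    Subtype.ext (by rw [heYdef, LinearMap.restrict_coe_apply, LieAlgebra.ad_apply])
  have hYapp : ∀ z : Y, hY z = ⟨⁅h, (z : g)⁆, hYh _ z.2⟩ := fun z =>
    Subtype.ext (by rw [hhYdef, LinearMap.restrict_coe_apply, LieAlgebra.ad_apply])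
  have hcomE : S ≤ S.comap eY := by
    rw [hS, Submodule.span_le, Set.singleton_subset_iff]
    have : eY ⟨y, hy⟩ = 0 := by rw [eYapp]; exact Subtype.ext hey
    simp only [SetLike.mem_coe, Submodule.mem_comap, this]
    exact S.zero_mem
  have hcomH : S ≤ S.comap hY := by
    rw [hS, Submodule.span_le, Set.singleton_subset_iff]
    have : hY ⟨y, hy⟩ = (μ : ℂ) • ⟨y, hy⟩ := by rw [hYapp]; exact Subtype.ext hhy
    simp only [SetLike.mem_coe, Submodule.mem_comap, this]
    exact Submodule.smul_mem _ _ (Submodule.mem_span_singleton_self _)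
  set E' : Module.End ℂ (Y ⧸ S) := Submodule.mapQ S S eY hcomE with hE'def
  set H' : Module.End ℂ (Y ⧸ S) := Submodule.mapQ S S hY hcomH + LinearMap.id with hH'def
  have hE' : ∀ z : Y, E' (Submodule.Quotient.mk z) =
      Submodule.Quotient.mk (⟨⁅e, (z : g)⁆, hYe (z : g) z.2⟩ : Y) := fun z => by
    rw [hE'def, Submodule.mapQ_apply, eYapp]
  have hH' : ∀ z : Y, H' (Submodule.Quotient.mk z) =
      Submodule.Quotient.mk (⟨⁅h, (z : g)⁆, hYh (z : g) z.2⟩ : Y) +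
        Submodule.Quotient.mk z := fun z => by
    rw [hH'def, LinearMap.add_apply, Submodule.mapQ_apply, hYapp, LinearMap.id_apply]
  -- computation rules on the vectors vY
  have qE : ∀ k : ℕ, E' (π (vY (k + 1))) = (((k : ℂ) + 1) * ((μ : ℂ) - k)) • π (vY k) := by
    intro k
    rw [hπ, hE' (vY (k + 1))]
    have hsub : (⟨⁅e, (vY (k+1) : g)⁆, hYe _ (vY (k+1)).2⟩ : Y)
        = (((k : ℂ) + 1) * ((μ : ℂ) - k)) • vY k := Subtype.ext (Le k)
    rw [hsub, Submodule.Quotient.mk_smul]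
  have qH : ∀ k : ℕ, H' (π (vY k)) = ((μ : ℂ) - 2 * k + 1) • π (vY k) := by
    intro k
    rw [hπ, hH' (vY k)]
    have hsub : (⟨⁅h, (vY k : g)⁆, hYh _ (vY k).2⟩ : Y)
        = ((μ : ℂ) - 2 * k) • vY k := Subtype.ext (Lh k)
    rw [hsub, Submodule.Quotient.mk_smul, add_smul, one_smul]
  -- F'
  have hF'ex : ∃ F' : Module.End ℂ (Y ⧸ S),
      ∀ k : ℕ, F' (π (vY k)) = ((k : ℂ) / ((k : ℂ) + 1)) • π (vY (k + 1)) := by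
    refine ⟨c.constr ℂ (fun j : Fin μ =>
      ((((j : ℕ) : ℂ) + 1) / (((j : ℕ) : ℂ) + 2)) • π (vY ((j : ℕ) + 2))), ?_⟩
    intro k
    cases k with
    | zero => rw [hπ0]; simp
    | succ k =>
        rcases Nat.lt_or_ge k μ with hkμ | hkμ
        · have : π (vY (k + 1)) = c ⟨k, hkμ⟩ := (hc ⟨k, hkμ⟩).symm
          rw [this, Module.Basis.constr_basis]
          have hidx : k + 1 + 1 = k + 2 := rfl
          rw [hidx]
          match_scalars
          push_cast
          ring
        · have h1 : vY (k + 1) = 0 := vYzero _ (by omega)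
          have h2 : vY (k + 2) = 0 := vYzero _ (by omega)
          rw [h1, h2]
          simp [hπ]
  obtain ⟨F', hF'⟩ := hF'ex
  have hne1 : ∀ n : ℕ, ((n : ℂ) + 1) ≠ 0 := fun n => Nat.cast_add_one_ne_zero n
  have hne2 : ∀ n : ℕ, ((n : ℂ) + 2) ≠ 0 := fun n => by
    intro hcon
    apply Nat.cast_add_one_ne_zero (R := ℂ) (n + 1)
    push_cast
    linear_combination hcon
  -- the sl2 relations
  have R1 : H' * E' - E' * H' = 2 • E' := by
    refine c.ext fun i => ?_
    simp only [LinearMap.sub_apply, Module.End.mul_apply, LinearMap.smul_apply, hc i,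
      map_smul, qE, qH, smul_smul]
    match_scalars <;> (try push_cast) <;> ring
  have R2 : H' * F' - F' * H' = -(2 • F') := by
    refine c.ext fun i => ?_
    simp only [LinearMap.sub_apply, Module.End.mul_apply, LinearMap.neg_apply,
      LinearMap.smul_apply, hc i, map_smul, qE, qH, hF', smul_smul]
    have h2 := hne2 (i : ℕ)
    have h2' : (2 + ((i : ℕ) : ℂ)) ≠ 0 := by rw [add_comm]; exact h2
    have h3 : (((i : ℕ) : ℂ) + 1 + 1) ≠ 0 := by rw [add_assoc]; norm_num; exact h2
    match_scalars <;> (try push_cast) <;> (try field_simp) <;> ring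
  have R3 : E' * F' - F' * E' = H' := by
    refine c.ext fun i => ?_
    simp only [LinearMap.sub_apply, Module.End.mul_apply, hc i, map_smul, qE, qH, hF',
      smul_smul]
    have h1 := hne1 (i : ℕ)
    have h2 := hne2 (i : ℕ)
    have h1' : (1 + ((i : ℕ) : ℂ)) ≠ 0 := by rw [add_comm]; exact h1
    have h2' : (2 + ((i : ℕ) : ℂ)) ≠ 0 := by rw [add_comm]; exact h2
    have h3 : (((i : ℕ) : ℂ) + 1 + 1) ≠ 0 := by rw [add_assoc]; norm_num; exact h2
    match_scalars <;> (try push_cast) <;> (try field_simp) <;> ring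
  -- the highest weight vector of the quotient
  have hfy : (⟨⁅f, y⁆, hYf y hy⟩ : Y) = vY 1 := Subtype.ext (by
    show ⁅f, y⁆ = vg 1
    rw [show (1 : ℕ) = 0 + 1 from rfl, vgsucc 0, vg0])
  have hc0 : c ⟨0, hμ⟩ = π (vY 1) := hc ⟨0, hμ⟩
  have hv1ne : (Submodule.Quotient.mk (⟨⁅f, y⁆, hYf y hy⟩ : Y) : Y ⧸ S) ≠ 0 := by
    rw [hfy, show (Submodule.Quotient.mk (vY 1) : Y ⧸ S) = π (vY 1) from rfl, ← hc0]
    exact c.ne_zero _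
  have hEv1 : E' (Submodule.Quotient.mk (⟨⁅f, y⁆, hYf y hy⟩ : Y)) = 0 := by
    rw [hfy, show (Submodule.Quotient.mk (vY 1) : Y ⧸ S) = π (vY 1) from rfl,
      show (1 : ℕ) = 0 + 1 from rfl, qE 0, hπ0, smul_zero]
  have hHv1 : H' (Submodule.Quotient.mk (⟨⁅f, y⁆, hYf y hy⟩ : Y)) =
      ((μ : ℂ) - 1) • Submodule.Quotient.mk (⟨⁅f, y⁆, hYf y hy⟩ : Y) := by
    rw [hfy, show (Submodule.Quotient.mk (vY 1) : Y ⧸ S) = π (vY 1) from rfl, qH 1]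
    congr 1
    push_cast
    ring
  -- irreducibility
  have hirr' : ∀ W : Submodule ℂ (Y ⧸ S),
      (∀ w ∈ W, E' w ∈ W) → (∀ w ∈ W, H' w ∈ W) → (∀ w ∈ W, F' w ∈ W) →
        W = ⊥ ∨ W = ⊤ := by
    intro W hWE hWH hWF
    by_cases hWbot : W = ⊥
    · exact Or.inl hWbot
    right
    -- W contains an eigenvector of H'
    have : Nontrivial W := by
      obtain ⟨x, hxW, hxne⟩ := Submodule.exists_mem_ne_zero_of_ne_bot hWbot
      exact nontrivial_of_ne ⟨x, hxW⟩ 0 (by simpa using hxne)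
    obtain ⟨lam, hlam⟩ := Module.End.exists_eigenvalue (H'.restrict hWH)
    obtain ⟨w0, hw0eig, hw0ne⟩ := hlam.exists_hasEigenvector
    set w : Y ⧸ S := (w0 : Y ⧸ S) with hw
    have hwW : w ∈ W := w0.2
    have hwne : w ≠ 0 := fun hcon => hw0ne (Subtype.ext hcon)
    have hweig : H' w = lam • w := by
      have := congrArg (Subtype.val) (Module.End.mem_eigenspace_iff.mp hw0eig)
      simpa [LinearMap.restrict_coe_apply] using this
    -- coefficients of H' in the basis c
    have repr_H : ∀ (q : Y ⧸ S) (i : Fin μ),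
        c.repr (H' q) i = ((μ : ℂ) - 2 * ((i : ℕ) + 1) + 1) * c.repr q i := by
      intro q i
      have hmaps : (c.coord i).comp (H' : (Y ⧸ S) →ₗ[ℂ] (Y ⧸ S)) =
          ((μ : ℂ) - 2 * ((i : ℕ) + 1) + 1) • c.coord i := by
        refine c.ext fun j => ?_
        simp only [LinearMap.comp_apply, LinearMap.smul_apply, Module.Basis.coord_apply]
        rw [hc j, qH ((j : ℕ) + 1), map_smul, ← hc j]
        simp only [Module.Basis.repr_self, Finsupp.smul_apply]
        rcases eq_or_ne j i with rfl | hji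
        · simp
        · simp [Finsupp.single_apply, hji]
      have := congrArg (fun L : (Y ⧸ S) →ₗ[ℂ] ℂ => L q) hmaps
      simpa [Module.Basis.coord_apply] using this
    have hco : ∀ i : Fin μ, ((μ : ℂ) - 2 * ((i : ℕ) + 1) + 1) * c.repr w i
        = lam * c.repr w i := by
      intro i
      rw [← repr_H, hweig, map_smul]
      simp
    obtain ⟨i₀, hi₀⟩ : ∃ i : Fin μ, c.repr w i ≠ 0 := by
      by_contra hcon
      push_neg at hcon
      apply hwne
      have : c.repr w = 0 := Finsupp.ext fun i => hcon i
      simpa using congrArg c.repr.symm this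
    set r : ℂ := c.repr w i₀ with hrdef
    have hlamval : lam = (μ : ℂ) - 2 * ((i₀ : ℕ) + 1) + 1 :=
      (mul_right_cancel₀ hi₀ (hco i₀)).symm
    have hvanish : ∀ i : Fin μ, i ≠ i₀ → c.repr w i = 0 := by
      intro i hii
      have := hco i
      rw [hlamval] at this
      have hne : ((μ : ℂ) - 2 * ((i : ℕ) + 1) + 1) ≠ ((μ : ℂ) - 2 * ((i₀ : ℕ) + 1) + 1) := by
        intro hcon
        apply hii
        have : ((i : ℕ) : ℂ) = ((i₀ : ℕ) : ℂ) := by linear_combination -hcon / 2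
        exact Fin.ext (by exact_mod_cast this)
      by_contra hcne
      exact hne (mul_right_cancel₀ hcne this)
    have hwc : w = r • c i₀ := by
      apply c.repr.injective
      rw [map_smul, Module.Basis.repr_self]
      ext j
      rcases eq_or_ne j i₀ with rfl | hji
      · simp [hrdef]
      · rw [hvanish j hji, Finsupp.smul_apply, Finsupp.single_apply, if_neg
          (fun hcon => hji hcon.symm), smul_zero]
    have hci₀W : c i₀ ∈ W := by
      have hmem : r⁻¹ • w ∈ W := Submodule.smul_mem _ _ hwW
      rw [hwc, smul_smul, inv_mul_cancel₀ hi₀, one_smul] at hmem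
      exact hmem
    -- propagate down to π (vY 1)
    have down : ∀ k : ℕ, ∀ hk : k < μ, π (vY (k + 1)) ∈ W → π (vY 1) ∈ W := by
      intro k
      induction k with
      | zero => exact fun _ hx => hx
      | succ k ih =>
          intro hk hx
          refine ih (by omega) ?_
          have hEx : E' (π (vY (k + 2))) ∈ W := hWE _ hx
          rw [show k + 2 = (k + 1) + 1 from rfl, qE (k + 1)] at hEx
          have hcoef : (((k + 1 : ℕ) : ℂ) + 1) * ((μ : ℂ) - (k + 1 : ℕ)) ≠ 0 := by
            apply mul_ne_zero (hne1 _)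
            have : ((k + 1 : ℕ) : ℂ) ≠ ((μ : ℕ) : ℂ) :=
              fun hcon => absurd (Nat.cast_injective hcon) (by omega)
            exact sub_ne_zero.mpr (fun hcon => this (by linear_combination -hcon))
          have := Submodule.smul_mem W ((((k + 1 : ℕ) : ℂ) + 1) * ((μ : ℂ) - (k + 1 : ℕ)))⁻¹ hEx
          rwa [smul_smul, inv_mul_cancel₀ hcoef, one_smul] at this
      -- propagate up
    have up : ∀ k : ℕ, π (vY (k + 1)) ∈ W → π (vY (k + 2)) ∈ W := by
      intro k hx
      have hFx : F' (π (vY (k + 1))) ∈ W := hWF _ hx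
      rw [hF' (k + 1)] at hFx
      have hcoef : (((k + 1 : ℕ) : ℂ) / (((k + 1 : ℕ) : ℂ) + 1)) ≠ 0 :=
        div_ne_zero (Nat.cast_ne_zero.mpr (Nat.succ_ne_zero k)) (hne1 (k + 1))
      have := Submodule.smul_mem W (((k + 1 : ℕ) : ℂ) / (((k + 1 : ℕ) : ℂ) + 1))⁻¹ hFx
      rwa [smul_smul, inv_mul_cancel₀ hcoef, one_smul] at this
    have hall : ∀ k : ℕ, π (vY (k + 1)) ∈ W := by
      have base : π (vY 1) ∈ W := by
        refine down (i₀ : ℕ) i₀.isLt ?_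
        rw [← hc i₀]
        exact hci₀W
      intro k
      induction k with
      | zero => exact base
      | succ k ih => exact up k ih
    -- conclude
    apply le_antisymm le_top
    rw [← c.span_eq]
    refine Submodule.span_le.mpr ?_
    rintro _ ⟨j, rfl⟩
    rw [hc j]
    exact hall (j : ℕ)
  exact ⟨E', H', F', hE', hH', R1, R2, R3, hv1ne, hEv1, hHv1, hirr'⟩
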